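/- Let R be a commutative unital ring and let A be a commutative R-algebra that is generated, as an R-algebra, by its set of idempotents E(A). Suppose that for every r ∈ R and every e ∈ E(A), re = 0 implies r = 0 or e = 0. Then there is an isomorphism of R-algebras Φ : A → Lc(Ê(A), R) such that Φ(e) = 1_{O_e} for every e ∈ E(A). -/

import Mathlib

/-- A Stone space: Hausdorff with a basis of compact open sets. -/
def IsStoneSpace (X : Type*) [TopologicalSpace X] : Prop :=
  T2Space X ∧ TopologicalSpace.IsTopologicalBasis {U : Set X | IsCompact U ∧ IsOpen U}

/-- `R` is indecomposable: its only idempotents are `0` and `1`. -/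
def IsIndecomposable (R : Type*) [CommRing R] : Prop :=
  ∀ r : R, IsIdempotentElem r → r = 0 ∨ r = 1

/-- The (possibly non-unital) `R`-algebra `Lc(Y,R)` of locally constant compactly
supported functions `Y → R`, as a non-unital subalgebra of `Y → R`. -/
def LcSub (R : Type*) [CommRing R] (Y : Type*) [TopologicalSpace Y] :
    NonUnitalSubalgebra R (Y → R) where
  carrier := {f : Y → R | IsLocallyConstant f ∧ HasCompactSupport f}
  add_mem' := fun hf hg => ⟨hf.1.comp₂ hg.1 (· + ·), hf.2.add hg.2⟩
  zero_mem' := by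
    refine ⟨IsLocallyConstant.const 0, ?_⟩
    rw [hasCompactSupport_def]
    simp
  mul_mem' := fun hf hg => ⟨hf.1.comp₂ hg.1 (· * ·), hf.2.mul_right⟩
  smul_mem' := fun c f hf =>
    ⟨hf.1.comp fun y => c • y, hf.2.mono (Function.support_const_smul_subset c f)⟩

/-- An ultrafilter (= prime filter) of the Boolean algebra `E(A)` of idempotents of a
commutative algebra `A`, where `e ≤ f` iff `e * f = e`, `e ⊓ f = e * f` and
`e ⊔ f = e + f - e * f`. -/
structure IdemUltra (A : Type*) [NonUnitalCommRing A] where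
  carrier : Set A
  idem : ∀ e ∈ carrier, IsIdempotentElem e
  nonempty : carrier.Nonempty
  zero_not_mem : (0 : A) ∉ carrier
  mul_mem : ∀ e ∈ carrier, ∀ f ∈ carrier, e * f ∈ carrier
  le_mem : ∀ e ∈ carrier, ∀ f : A, IsIdempotentElem f → e * f = e → f ∈ carrier
  prime : ∀ e f : A, IsIdempotentElem e → IsIdempotentElem f →
    e + f - e * f ∈ carrier → e ∈ carrier ∨ f ∈ carrier

/-- The basic open set `O_e` of the Stone dual `Ê(A)`. -/
def OE {A : Type*} [NonUnitalCommRing A] (e : A) : Set (IdemUltra A) :=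
  {ξ | e ∈ ξ.carrier}

/-- The Stone topology on `Ê(A)`, generated by the sets `O_e`. -/
instance (A : Type*) [NonUnitalCommRing A] : TopologicalSpace (IdemUltra A) :=
  TopologicalSpace.generateFrom {V | ∃ e : A, IsIdempotentElem e ∧ V = OE e}

/-- The topology of pointwise convergence (with `R` discrete) on the character space
`Â` of `R`-algebra homomorphisms `A → R`. -/
instance charSpaceTopology (R : Type*) [CommRing R] (A : Type*) [NonUnitalCommRing A]
    [Module R A] : TopologicalSpace (A →ₙₐ[R] R) :=
  TopologicalSpace.induced (fun φ => (φ : A → R))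
    (@Pi.topologicalSpace A (fun _ => R) fun _ => ⊥)


section KeimelProof

open Unitization TopologicalSpace

variable {R : Type*} [CommRing R] {A : Type*} [NonUnitalCommRing A]

/-! ### Transfer of commutative-ring identities to the non-unital setting -/

set_option linter.unusedSectionVars false in
private lemma nu_eq {x y : A} (h : (↑x : Unitization ℤ A) = ↑y) : x = y :=
  Unitization.inr_injective h

private lemma nu_mul' {x y : A} (h : x * y = x) :
    (↑x : Unitization ℤ A) * ↑y = ↑x := by rw [← Unitization.inr_mul, h]

private lemma nu_mul0 {x y : A} (h : x * y = 0) :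
    (↑x : Unitization ℤ A) * ↑y = 0 := by
  rw [← Unitization.inr_mul, h, Unitization.inr_zero]

private lemma nu_idem_mul {e f : A} (he : e * e = e) (hf : f * f = f) :
    (e * f) * (e * f) = e * f := by
  apply nu_eq; simp only [Unitization.inr_mul]
  linear_combination (f : Unitization ℤ A) * (f : Unitization ℤ A) * (nu_mul' he) +
    (e : Unitization ℤ A) * (nu_mul' hf)

private lemma nu_compl_idem {m e : A} (hm : m * m = m) (he : e * e = e) :
    (m - m * e) * (m - m * e) = m - m * e := by
  apply nu_eq; simp only [Unitization.inr_mul, Unitization.inr_sub]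
  linear_combination (1 - (e : Unitization ℤ A)) * (1 - (e : Unitization ℤ A)) * (nu_mul' hm) +
    (m : Unitization ℤ A) * (nu_mul' he)

private lemma nu_compl_orth {m e : A} (hm : m * m = m) (he : e * e = e) :
    (m - m * e) * (m * e) = 0 := by
  apply nu_eq
  simp only [Unitization.inr_mul, Unitization.inr_sub, Unitization.inr_zero]
  linear_combination ((e : Unitization ℤ A) - e * e) * (nu_mul' hm) -
    (m : Unitization ℤ A) * (nu_mul' he)

private lemma nu_compl_join {m e : A} (hm : m * m = m) (he : e * e = e) :
    (m - m * e) + m * e - (m - m * e) * (m * e) = m := by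
  apply nu_eq
  simp only [Unitization.inr_mul, Unitization.inr_sub, Unitization.inr_add]
  linear_combination ((e : Unitization ℤ A) * e - e) * (nu_mul' hm) +
    (m : Unitization ℤ A) * (nu_mul' he)

private lemma nu_mul_compl {m e : A} (he : e * e = e) :
    e * (m - m * e) = 0 := by
  apply nu_eq
  simp only [Unitization.inr_mul, Unitization.inr_sub, Unitization.inr_zero]
  linear_combination (-(m : Unitization ℤ A)) * (nu_mul' he)

private lemma nu_sup_idem {e f : A} (he : e * e = e) (hf : f * f = f) :
    (e + f - e * f) * (e + f - e * f) = e + f - e * f := by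
  apply nu_eq
  simp only [Unitization.inr_mul, Unitization.inr_sub, Unitization.inr_add]
  linear_combination (1 - (f : Unitization ℤ A)) * (1 - (f : Unitization ℤ A)) * (nu_mul' he) +
    (1 - (e : Unitization ℤ A)) * (nu_mul' hf)

private lemma nu_le_sup_left {e f : A} (he : e * e = e) :
    e * (e + f - e * f) = e := by
  apply nu_eq
  simp only [Unitization.inr_mul, Unitization.inr_sub, Unitization.inr_add]
  linear_combination (1 - (f : Unitization ℤ A)) * (nu_mul' he)

private lemma nu_le_sup_right {e f : A} (hf : f * f = f) :
    f * (e + f - e * f) = f := by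
  apply nu_eq
  simp only [Unitization.inr_mul, Unitization.inr_sub, Unitization.inr_add]
  linear_combination (1 - (e : Unitization ℤ A)) * (nu_mul' hf)

private lemma nu_locunit {a E₁ E₂ : A} (h1 : a * E₁ = a) :
    a * (E₁ + E₂ - E₁ * E₂) = a := by
  apply nu_eq
  simp only [Unitization.inr_mul, Unitization.inr_sub, Unitization.inr_add]
  linear_combination (1 - (E₂ : Unitization ℤ A)) * (nu_mul' h1)

private lemma nu_locunit' {a E₁ E₂ : A} (h2 : a * E₂ = a) :
    a * (E₁ + E₂ - E₁ * E₂) = a := by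
  apply nu_eq
  simp only [Unitization.inr_mul, Unitization.inr_sub, Unitization.inr_add]
  linear_combination (1 - (E₁ : Unitization ℤ A)) * (nu_mul' h2)

private lemma nu_zero_sup {m₁ m₂ e f : A} (h1 : m₁ * e = 0) (h2 : m₂ * f = 0) :
    (m₁ * m₂) * (e + f - e * f) = 0 := by
  apply nu_eq
  simp only [Unitization.inr_mul, Unitization.inr_sub, Unitization.inr_add, Unitization.inr_zero]
  linear_combination ((m₂ : Unitization ℤ A) - m₂ * f) * (nu_mul0 h1) +
    (m₁ : Unitization ℤ A) * (nu_mul0 h2)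

private lemma nu_qe_qe {q q' e : A} (h : q * q' = 0) :
    (q * e) * (q' * e) = 0 := by
  apply nu_eq
  simp only [Unitization.inr_mul, Unitization.inr_zero]
  linear_combination (e : Unitization ℤ A) * e * (nu_mul0 h)

private lemma nu_qe_qc {q q' e : A} (he : e * e = e) :
    (q * e) * (q' - q' * e) = 0 := by
  apply nu_eq
  simp only [Unitization.inr_mul, Unitization.inr_sub, Unitization.inr_zero]
  linear_combination (-((q : Unitization ℤ A) * q')) * (nu_mul' he)

private lemma nu_qc_qc {q q' e : A} (h : q * q' = 0) :
    (q - q * e) * (q' - q' * e) = 0 := by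
  apply nu_eq
  simp only [Unitization.inr_mul, Unitization.inr_sub, Unitization.inr_zero]
  linear_combination (1 - (e : Unitization ℤ A)) * (1 - (e : Unitization ℤ A)) * (nu_mul0 h)

private lemma nu_qe_rest {q e Q : A} (h2 : Q * q = q) :
    (q * e) * (e - e * Q) = 0 := by
  have h2' := congrArg (Unitization.inr (R := ℤ)) h2
  simp only [Unitization.inr_mul] at h2'
  apply nu_eq
  simp only [Unitization.inr_mul, Unitization.inr_sub, Unitization.inr_zero]
  linear_combination (-((e : Unitization ℤ A) * e)) * h2'

private lemma nu_qc_rest {q e Q : A} (h2 : Q * q = q) :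
    (q - q * e) * (e - e * Q) = 0 := by
  have h2' := congrArg (Unitization.inr (R := ℤ)) h2
  simp only [Unitization.inr_mul] at h2'
  apply nu_eq
  simp only [Unitization.inr_mul, Unitization.inr_sub, Unitization.inr_zero]
  linear_combination ((e : Unitization ℤ A) * e - e) * h2'

private lemma nu_rest_idem {e Q : A} (he : e * e = e) (hQ : Q * Q = Q) :
    (e - e * Q) * (e - e * Q) = e - e * Q := by
  apply nu_eq
  simp only [Unitization.inr_mul, Unitization.inr_sub]
  linear_combination (1 - (Q : Unitization ℤ A)) * (1 - (Q : Unitization ℤ A)) * (nu_mul' he) +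
    (e : Unitization ℤ A) * (nu_mul' hQ)

private lemma nu_F_mul {m₁ m₂ g x y : A} (h1 : (m₁ * g) * x = m₁ * g)
    (h2 : (m₂ * g) * y = m₂ * g) :
    ((m₁ * m₂) * g) * (x * y) = (m₁ * m₂) * g := by
  have h1' := congrArg (Unitization.inr (R := ℤ)) h1
  have h2' := congrArg (Unitization.inr (R := ℤ)) h2
  simp only [Unitization.inr_mul] at h1' h2'
  apply nu_eq
  simp only [Unitization.inr_mul]
  linear_combination ((m₂ : Unitization ℤ A) * y) * h1' + (m₁ : Unitization ℤ A) * h2'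

private lemma nu_F_le {m g x y : A} (h1 : (m * g) * x = m * g) (hxy : x * y = x) :
    (m * g) * y = m * g := by
  have h1' := congrArg (Unitization.inr (R := ℤ)) h1
  have hxy' := congrArg (Unitization.inr (R := ℤ)) hxy
  simp only [Unitization.inr_mul] at h1' hxy'
  apply nu_eq
  simp only [Unitization.inr_mul]
  linear_combination (1 - (y : Unitization ℤ A)) * h1' +
    ((m : Unitization ℤ A) * g) * hxy'

end KeimelProof


section KeimelProof2

set_option linter.unusedSectionVars false

open Unitization TopologicalSpace

variable {R : Type*} [CommRing R] {A : Type*} [NonUnitalCommRing A]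

namespace IdemUltra

private lemma mem_idem (ξ : IdemUltra A) {e : A} (h : e ∈ ξ.carrier) : IsIdempotentElem e :=
  ξ.idem e h

private lemma mem_ne_zero (ξ : IdemUltra A) {e : A} (h : e ∈ ξ.carrier) : e ≠ 0 :=
  fun h0 => ξ.zero_not_mem (h0 ▸ h)

private lemma mem_of_mul_mem_right (ξ : IdemUltra A) {e f : A} (hf : IsIdempotentElem f)
    (h : e * f ∈ ξ.carrier) : f ∈ ξ.carrier :=
  ξ.le_mem _ h f hf (by rw [mul_assoc, hf.eq])

private lemma mem_of_mul_mem_left (ξ : IdemUltra A) {e f : A} (he : IsIdempotentElem e)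
    (h : e * f ∈ ξ.carrier) : e ∈ ξ.carrier :=
  ξ.mem_of_mul_mem_right he (by rwa [mul_comm])

/-- If `e ∉ ξ` then some `g ∈ ξ` is orthogonal to `e`. -/
private lemma compl_mem (ξ : IdemUltra A) {e : A} (he : IsIdempotentElem e)
    (hne : e ∉ ξ.carrier) : ∃ g ∈ ξ.carrier, e * g = 0 := by
  obtain ⟨m, hm⟩ := ξ.nonempty
  have hmi := (ξ.mem_idem hm).eq
  have hgi : IsIdempotentElem (m - m * e) := nu_compl_idem hmi he.eq
  refine ⟨m - m * e, ?_, nu_mul_compl he.eq⟩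
  rcases ξ.prime (m - m * e) (m * e) hgi (nu_idem_mul hmi he.eq)
      (by rw [nu_compl_join hmi he.eq]; exact hm) with h | h
  · exact h
  · exact absurd (ξ.mem_of_mul_mem_right he h) hne

private lemma sup_mem_left (ξ : IdemUltra A) {e f : A} (he : e ∈ ξ.carrier)
    (hfI : IsIdempotentElem f) : e + f - e * f ∈ ξ.carrier :=
  ξ.le_mem e he _ (nu_sup_idem (ξ.mem_idem he).eq hfI.eq) (nu_le_sup_left (ξ.mem_idem he).eq)

private lemma sup_mem_right (ξ : IdemUltra A) {e f : A} (heI : IsIdempotentElem e)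
    (hf : f ∈ ξ.carrier) : e + f - e * f ∈ ξ.carrier :=
  ξ.le_mem f hf _ (nu_sup_idem heI.eq (ξ.mem_idem hf).eq) (nu_le_sup_right (ξ.mem_idem hf).eq)

end IdemUltra

private lemma OE_zero : OE (0 : A) = ∅ := by
  ext ξ; simp only [OE, Set.mem_setOf_eq, Set.mem_empty_iff_false, iff_false]
  exact ξ.zero_not_mem

private lemma OE_sup {e f : A} (heI : IsIdempotentElem e) (hfI : IsIdempotentElem f) :
    OE (e + f - e * f) = OE e ∪ OE f := by
  ext ξ
  constructor
  · intro h
    exact ξ.prime e f heI hfI h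
  · rintro (h | h)
    · exact ξ.sup_mem_left h hfI
    · exact ξ.sup_mem_right heI h

private lemma isOpen_OE {e : A} (heI : IsIdempotentElem e) : IsOpen (OE e) :=
  TopologicalSpace.isOpen_generateFrom_of_mem ⟨e, heI, rfl⟩

private lemma isClosed_OE {e : A} (heI : IsIdempotentElem e) : IsClosed (OE e) := by
  rw [← isOpen_compl_iff, isOpen_iff_forall_mem_open]
  intro ξ hξ
  obtain ⟨g, hg, hg0⟩ := ξ.compl_mem heI hξ
  refine ⟨OE g, ?_, isOpen_OE (ξ.mem_idem hg), hg⟩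
  intro ξ' hξ'
  intro hE
  have := ξ'.mul_mem e hE g hξ'
  rw [hg0] at this
  exact ξ'.zero_not_mem this

private lemma stone_topology_eq :
    (instTopologicalSpaceIdemUltra A : TopologicalSpace (IdemUltra A)) =
      TopologicalSpace.generateFrom {V | ∃ e : A, IsIdempotentElem e ∧ V = OE e} := rfl

private lemma exists_basic_subset {U : Set (IdemUltra A)} (hU : IsOpen U) {ξ : IdemUltra A}
    (hξ : ξ ∈ U) : ∃ e : A, IsIdempotentElem e ∧ ξ ∈ OE e ∧ OE e ⊆ U := by
  have hnhds : U ∈ @nhds _ (TopologicalSpace.generateFrom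
      {V | ∃ e : A, IsIdempotentElem e ∧ V = OE e}) ξ := hU.mem_nhds hξ
  rw [TopologicalSpace.nhds_generateFrom] at hnhds
  rw [Filter.mem_biInf_of_directed] at hnhds
  · obtain ⟨s, ⟨hξs, e, heI, rfl⟩, hsU⟩ := hnhds
    exact ⟨e, heI, hξs, Filter.mem_principal.mp hsU⟩
  · rintro s ⟨hξs, e, heI, rfl⟩ t ⟨hξt, f, hfI, rfl⟩
    refine ⟨OE (e * f), ⟨ξ.mul_mem e hξs f hξt, e * f, nu_idem_mul heI.eq hfI.eq, rfl⟩, ?_, ?_⟩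
    · exact Filter.principal_mono.mpr fun ξ' h' => ξ'.mem_of_mul_mem_left heI h'
    · exact Filter.principal_mono.mpr fun ξ' h' => ξ'.mem_of_mul_mem_right hfI h'
  · obtain ⟨m, hm⟩ := ξ.nonempty
    exact ⟨OE m, hm, m, ξ.mem_idem hm, rfl⟩

private lemma isCompact_OE {e : A} (heI : IsIdempotentElem e) : IsCompact (OE e) := by
  rw [isCompact_iff_ultrafilter_le_nhds]
  intro 𝒰 h𝒰
  rw [Filter.le_principal_iff] at h𝒰
  set ξ₀ : IdemUltra A :=
    { carrier := {f | OE f ∈ 𝒰}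
      idem := by
        intro f hf
        obtain ⟨ξ', hξ'⟩ := Ultrafilter.nonempty_of_mem hf
        exact ξ'.idem f hξ'
      nonempty := ⟨e, h𝒰⟩
      zero_not_mem := by
        intro h
        rw [Set.mem_setOf_eq, OE_zero] at h
        exact Ultrafilter.empty_notMem h
      mul_mem := by
        intro x hx y hy
        exact Filter.mem_of_superset (Filter.inter_mem hx hy)
          (fun ξ' ⟨h1, h2⟩ => ξ'.mul_mem x h1 y h2)
      le_mem := by
        intro x hx f hfI hxf
        exact Filter.mem_of_superset hx (fun ξ' h' => ξ'.le_mem x h' f hfI hxf)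
      prime := by
        intro x y hxI hyI hxy
        have : OE x ∪ OE y ∈ 𝒰 := by
          rw [← OE_sup hxI hyI]; exact hxy
        exact (Ultrafilter.union_mem_iff).mp this } with hξ₀
  refine ⟨ξ₀, h𝒰, ?_⟩
  rw [stone_topology_eq, TopologicalSpace.nhds_generateFrom]
  refine le_iInf₂ ?_
  rintro s ⟨hξs, f, hfI, rfl⟩
  rw [Filter.le_principal_iff]
  exact hξs

private lemma compact_open_eq_OE {U : Set (IdemUltra A)} (hc : IsCompact U) (ho : IsOpen U) :
    ∃ E : A, IsIdempotentElem E ∧ OE E = U := by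
  classical
  have hbasic : ∀ ξ : U, ∃ e : A, IsIdempotentElem e ∧ (ξ : IdemUltra A) ∈ OE e ∧ OE e ⊆ U :=
    fun ξ => exists_basic_subset ho ξ.2
  choose g hgI hgm hgs using hbasic
  obtain ⟨t, ht⟩ := hc.elim_finite_subcover (fun ξ : U => OE (g ξ))
    (fun ξ => isOpen_OE (hgI ξ)) (fun ξ hξ => Set.mem_iUnion.mpr ⟨⟨ξ, hξ⟩, hgm _⟩)
  have key : ∀ s : Finset U, ∃ E : A, IsIdempotentElem E ∧ OE E = ⋃ ξ ∈ s, OE (g ξ) := by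
    intro s
    induction s using Finset.induction with
    | empty => exact ⟨0, by rw [IsIdempotentElem]; rw [mul_zero], by rw [OE_zero]; simp⟩
    | @insert i s hni ih =>
      obtain ⟨E, hEI, hEU⟩ := ih
      refine ⟨g i + E - g i * E, nu_sup_idem (hgI i).eq hEI.eq, ?_⟩
      rw [OE_sup (hgI i) hEI, hEU, Finset.set_biUnion_insert]
  obtain ⟨E, hEI, hEU⟩ := key t
  refine ⟨E, hEI, ?_⟩
  rw [hEU]
  refine subset_antisymm ?_ ht
  exact Set.iUnion₂_subset fun ξ _ => hgs ξ

end KeimelProof2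


section KeimelProof3

set_option linter.unusedSectionVars false
set_option linter.unusedVariables false

open Unitization TopologicalSpace

variable {R : Type*} [CommRing R] {A : Type*} [NonUnitalCommRing A]

/-- Every nonzero idempotent lies in some ultrafilter of idempotents (Zorn). -/
private lemma exists_ultra {p : A} (hpI : IsIdempotentElem p) (hp0 : p ≠ 0) :
    ∃ ξ : IdemUltra A, p ∈ ξ.carrier := by
  classical
  set S : Set (Set A) := {F | p ∈ F ∧ (0 : A) ∉ F ∧ (∀ e ∈ F, IsIdempotentElem e) ∧
      (∀ e ∈ F, ∀ f ∈ F, e * f ∈ F) ∧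
      (∀ e ∈ F, ∀ f : A, IsIdempotentElem f → e * f = e → f ∈ F)} with hS
  have hS0 : {f : A | IsIdempotentElem f ∧ p * f = p} ∈ S := by
    refine ⟨⟨hpI, hpI.eq⟩, ?_, fun e he => he.1, ?_, ?_⟩
    · rintro ⟨-, h⟩
      rw [mul_zero] at h
      exact hp0 h.symm
    · rintro e ⟨heI, he⟩ f ⟨hfI, hf⟩
      exact ⟨nu_idem_mul heI.eq hfI.eq, by rw [← mul_assoc, he, hf]⟩
    · rintro e ⟨heI, he⟩ f hfI hef
      exact ⟨hfI, by rw [← he, mul_assoc, hef]⟩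
  have hchain : ∀ c ⊆ S, IsChain (· ⊆ ·) c → c.Nonempty →
      ∃ ub ∈ S, ∀ s ∈ c, s ⊆ ub := by
    intro c hcS hchain hcne
    obtain ⟨F₀, hF₀⟩ := hcne
    refine ⟨⋃₀ c, ⟨⟨F₀, hF₀, (hcS hF₀).1⟩, ?_, ?_, ?_, ?_⟩, fun s hs => Set.subset_sUnion_of_mem hs⟩
    · rintro ⟨F, hF, h0F⟩
      exact (hcS hF).2.1 h0F
    · rintro x ⟨F, hF, hxF⟩
      exact (hcS hF).2.2.1 x hxF
    · rintro x ⟨F, hF, hxF⟩ y ⟨G, hG, hyG⟩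
      rcases hchain.total hF hG with h | h
      · exact ⟨G, hG, (hcS hG).2.2.2.1 x (h hxF) y hyG⟩
      · exact ⟨F, hF, (hcS hF).2.2.2.1 x hxF y (h hyG)⟩
    · rintro x ⟨F, hF, hxF⟩ f hfI hxf
      exact ⟨F, hF, (hcS hF).2.2.2.2 x hxF f hfI hxf⟩
  obtain ⟨M, hM0, hMmax⟩ := zorn_subset_nonempty S hchain _ hS0
  · obtain ⟨hpM, h0M, hidem, hmul, hle⟩ := hMmax.prop
    refine ⟨⟨M, hidem, ⟨p, hpM⟩, h0M, hmul, hle, ?_⟩, hpM⟩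
    intro e f heI hfI hsup
    by_contra hcon
    push_neg at hcon
    obtain ⟨heM, hfM⟩ := hcon
    have key : ∀ g : A, IsIdempotentElem g → g ∉ M → ∃ m ∈ M, m * g = 0 := by
      intro g hgI hgM
      by_contra hno
      push_neg at hno
      set F : Set A := {x | IsIdempotentElem x ∧ ∃ m ∈ M, (m * g) * x = m * g} with hF
      have hFS : F ∈ S := by
        refine ⟨⟨hpI, p, hpM, by rw [mul_right_comm, hpI.eq]⟩, ?_, fun x hx => hx.1, ?_, ?_⟩
        · rintro ⟨-, m, hm, hm0⟩
          rw [mul_zero] at hm0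
          exact hno m hm hm0.symm
        · rintro x ⟨hxI, m₁, hm₁, h1⟩ y ⟨hyI, m₂, hm₂, h2⟩
          exact ⟨nu_idem_mul hxI.eq hyI.eq, m₁ * m₂, hmul _ hm₁ _ hm₂, nu_F_mul h1 h2⟩
        · rintro x ⟨hxI, m, hm, h1⟩ y hyI hxy
          exact ⟨hyI, m, hm, nu_F_le h1 hxy⟩
      have hMF : M ⊆ F := by
        intro x hx
        exact ⟨hidem x hx, x, hx, by rw [mul_right_comm, (hidem x hx).eq]⟩
      have hgF : g ∈ F := ⟨hgI, p, hpM, by rw [mul_assoc, hgI.eq]⟩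
      exact hgM (hMmax.2 hFS hMF hgF)
    obtain ⟨m₁, hm₁, h1⟩ := key e heI heM
    obtain ⟨m₂, hm₂, h2⟩ := key f hfI hfM
    have hmem : m₁ * m₂ * (e + f - e * f) ∈ M := hmul _ (hmul _ hm₁ _ hm₂) _ hsup
    rw [nu_zero_sup h1 h2] at hmem
    exact h0M hmem

variable [Module R A] [SMulCommClass R A A] [IsScalarTower R A A]

private lemma span_top (hgen : NonUnitalAlgebra.adjoin R {e : A | IsIdempotentElem e} = ⊤) :
    Submodule.span R {e : A | IsIdempotentElem e} = ⊤ := by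
  have h1 : ∀ x ∈ Subsemigroup.closure {e : A | IsIdempotentElem e}, IsIdempotentElem x := by
    intro x hx
    induction hx using Subsemigroup.closure_induction with
    | mem x hx => exact hx
    | mul x y hx hy ihx ihy => exact nu_idem_mul ihx.eq ihy.eq
  refine top_unique ?_
  intro x _
  have hx : x ∈ (NonUnitalAlgebra.adjoin R {e : A | IsIdempotentElem e}).toSubmodule := by
    rw [hgen]; trivial
  rw [NonUnitalAlgebra.adjoin_eq_span] at hx
  exact Submodule.span_mono h1 hx

private lemma exists_val (hgen : NonUnitalAlgebra.adjoin R {e : A | IsIdempotentElem e} = ⊤)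
    (a : A) (ξ : IdemUltra A) : ∃ r : R, ∃ e ∈ ξ.carrier, a * e = r • e := by
  have ha : a ∈ Submodule.span R {e : A | IsIdempotentElem e} := by
    rw [span_top hgen]; trivial
  induction ha using Submodule.span_induction with
  | mem x hx =>
    by_cases hxm : x ∈ ξ.carrier
    · exact ⟨1, x, hxm, by rw [hx.eq, one_smul]⟩
    · obtain ⟨g, hg, hg0⟩ := ξ.compl_mem hx hxm
      exact ⟨0, g, hg, by rw [hg0, zero_smul]⟩
  | zero =>
    obtain ⟨m, hm⟩ := ξ.nonempty
    exact ⟨0, m, hm, by rw [zero_mul, zero_smul]⟩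
  | add x y hx hy ihx ihy =>
    obtain ⟨r₁, e₁, he₁, h₁⟩ := ihx
    obtain ⟨r₂, e₂, he₂, h₂⟩ := ihy
    refine ⟨r₁ + r₂, e₁ * e₂, ξ.mul_mem e₁ he₁ e₂ he₂, ?_⟩
    have hx' : x * (e₁ * e₂) = r₁ • (e₁ * e₂) := by
      rw [← mul_assoc, h₁, smul_mul_assoc]
    have hy' : y * (e₁ * e₂) = r₂ • (e₁ * e₂) := by
      rw [mul_comm e₁ e₂, ← mul_assoc, h₂, smul_mul_assoc, mul_comm e₂ e₁]
    rw [add_mul, hx', hy', add_smul]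
  | smul s x hx ihx =>
    obtain ⟨r, e, he, h⟩ := ihx
    exact ⟨s * r, e, he, by rw [smul_mul_assoc, h, smul_smul]⟩

private lemma locunit (hgen : NonUnitalAlgebra.adjoin R {e : A | IsIdempotentElem e} = ⊤)
    (a : A) : ∃ E : A, IsIdempotentElem E ∧ a * E = a := by
  have ha : a ∈ Submodule.span R {e : A | IsIdempotentElem e} := by
    rw [span_top hgen]; trivial
  induction ha using Submodule.span_induction with
  | mem x hx => exact ⟨x, hx, hx.eq⟩
  | zero => exact ⟨0, by rw [IsIdempotentElem, mul_zero], by rw [zero_mul]⟩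
  | add x y hx hy ihx ihy =>
    obtain ⟨E₁, hE₁I, hE₁⟩ := ihx
    obtain ⟨E₂, hE₂I, hE₂⟩ := ihy
    refine ⟨E₁ + E₂ - E₁ * E₂, nu_sup_idem hE₁I.eq hE₂I.eq, ?_⟩
    rw [add_mul, nu_locunit hE₁, nu_locunit' hE₂]
  | smul s x hx ihx =>
    obtain ⟨E, hEI, hE⟩ := ihx
    exact ⟨E, hEI, by rw [smul_mul_assoc, hE]⟩

end KeimelProof3


section KeimelProof4

set_option linter.unusedSectionVars false
set_option linter.unusedVariables false

variable {R : Type*} [CommRing R] {A : Type*} [NonUnitalCommRing A]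
  [Module R A] [SMulCommClass R A A] [IsScalarTower R A A]

private lemma list_sum_mul (L : List (R × A)) (f : R × A → A) (x : A) :
    (L.map f).sum * x = (L.map fun p => f p * x).sum := by
  induction L with
  | nil => simp
  | cons hd tl ih => simp [add_mul, ih]

private lemma list_mul_sum (L : List (R × A)) (f : R × A → A) (x : A) :
    x * (L.map f).sum = (L.map fun p => x * f p).sum := by
  induction L with
  | nil => simp
  | cons hd tl ih => simp [mul_add, ih]

private lemma list_sum_add (L : List (R × A)) (f g : R × A → A) :
    (L.map fun p => f p + g p).sum = (L.map f).sum + (L.map g).sum := by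
  induction L with
  | nil => simp
  | cons hd tl ih => simp only [List.map_cons, List.sum_cons, ih]; abel

private lemma list_sum_sub (L : List (R × A)) (f g : R × A → A) :
    (L.map fun p => f p - g p).sum = (L.map f).sum - (L.map g).sum := by
  induction L with
  | nil => simp
  | cons hd tl ih => simp only [List.map_cons, List.sum_cons, ih]; abel

private lemma list_smul_sum (L : List (R × A)) (f : R × A → A) (r : R) :
    (L.map fun p => r • f p).sum = r • (L.map f).sum := by
  induction L with
  | nil => simp
  | cons hd tl ih => simp only [List.map_cons, List.sum_cons, ih, smul_add]

/-- Facts about the join `Q` of a pairwise-orthogonal list of idempotents. -/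
private lemma Q_facts (L : List (R × A)) (hidem : ∀ p ∈ L, IsIdempotentElem p.2)
    (horth : L.Pairwise fun p q => p.2 * q.2 = 0) :
    (∀ p ∈ L, (L.map Prod.snd).sum * p.2 = p.2) ∧
      IsIdempotentElem (L.map Prod.snd).sum := by
  induction L with
  | nil =>
    refine ⟨by simp, ?_⟩
    rw [List.map_nil, List.sum_nil, IsIdempotentElem, mul_zero]
  | cons hd tl ih =>
    obtain ⟨horth_hd, horth_tl⟩ := List.pairwise_cons.mp horth
    obtain ⟨ih1, ih2⟩ := ih (fun p hp => hidem p (List.mem_cons_of_mem _ hp)) horth_tl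
    have hQ'hd : (tl.map Prod.snd).sum * hd.2 = 0 := by
      rw [list_sum_mul]
      refine List.sum_eq_zero ?_
      intro x hx
      obtain ⟨q, hq, rfl⟩ := List.mem_map.mp hx
      rw [mul_comm]
      exact horth_hd q hq
    have hhdQ' : hd.2 * (tl.map Prod.snd).sum = 0 := by
      rw [list_mul_sum]
      refine List.sum_eq_zero ?_
      intro x hx
      obtain ⟨q, hq, rfl⟩ := List.mem_map.mp hx
      exact horth_hd q hq
    have hsum : ((hd :: tl).map Prod.snd).sum = hd.2 + (tl.map Prod.snd).sum := by simp
    constructor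
    · intro p hp
      rcases List.mem_cons.mp hp with rfl | hp'
      · rw [hsum, add_mul, (hidem p (List.mem_cons_self)).eq, hQ'hd, add_zero]
      · rw [hsum, add_mul, ih1 p hp', horth_hd p hp', zero_add]
    · rw [hsum, IsIdempotentElem, add_mul, mul_add, mul_add,
        (hidem hd (List.mem_cons_self)).eq, hhdQ', hQ'hd, ih2.eq, add_zero, zero_add]

/-- `a` admits a representation as an `R`-combination of pairwise orthogonal idempotents. -/
private def OrthoRep (R : Type*) [CommRing R] {A : Type*} [NonUnitalCommRing A] [Module R A]
    (a : A) : Prop :=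
  ∃ L : List (R × A), (∀ p ∈ L, IsIdempotentElem p.2) ∧
    (L.Pairwise fun p q => p.2 * q.2 = 0) ∧ (L.map fun p => p.1 • p.2).sum = a

private lemma orthoRep_step {a : A} (ha : OrthoRep R a) (r : R) {e : A}
    (he : IsIdempotentElem e) : OrthoRep R (a + r • e) := by
  obtain ⟨L, hidem, horth, hsum⟩ := ha
  obtain ⟨hQmul, hQidem⟩ := Q_facts L hidem horth
  set Q : A := (L.map Prod.snd).sum with hQdef
  refine ⟨(L.map fun p => (p.1 + r, p.2 * e)) ++
    ((L.map fun p => (p.1, p.2 - p.2 * e)) ++ [(r, e - e * Q)]), ?_, ?_, ?_⟩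
  · intro p hp
    rcases List.mem_append.mp hp with hp1 | hp2
    · obtain ⟨q, hq, rfl⟩ := List.mem_map.mp hp1
      exact nu_idem_mul (hidem q hq).eq he.eq
    · rcases List.mem_append.mp hp2 with hp3 | hp4
      · obtain ⟨q, hq, rfl⟩ := List.mem_map.mp hp3
        exact nu_compl_idem (hidem q hq).eq he.eq
      · rw [List.mem_singleton] at hp4
        subst hp4
        exact nu_rest_idem he.eq hQidem.eq
  · rw [List.pairwise_append]
    refine ⟨?_, ?_, ?_⟩
    · rw [List.pairwise_map]
      exact horth.imp fun h => nu_qe_qe h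
    · rw [List.pairwise_append]
      refine ⟨?_, ?_, ?_⟩
      · rw [List.pairwise_map]
        exact horth.imp fun h => nu_qc_qc h
      · simp
      · intro x hx y hy
        obtain ⟨q, hq, rfl⟩ := List.mem_map.mp hx
        rw [List.mem_singleton] at hy
        subst hy
        exact nu_qc_rest (hQmul q hq)
    · intro x hx y hy
      obtain ⟨q, hq, rfl⟩ := List.mem_map.mp hx
      rcases List.mem_append.mp hy with hy1 | hy2
      · obtain ⟨q', hq', rfl⟩ := List.mem_map.mp hy1
        exact nu_qe_qc he.eq
      · rw [List.mem_singleton] at hy2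
        subst hy2
        exact nu_qe_rest (hQmul q hq)
  · rw [List.map_append, List.sum_append, List.map_append, List.sum_append,
      List.map_map, List.map_map]
    have e1 : (L.map ((fun p : R × A => p.1 • p.2) ∘ fun p => (p.1 + r, p.2 * e))).sum
        = a * e + r • (Q * e) := by
      have : (L.map ((fun p : R × A => p.1 • p.2) ∘ fun p => (p.1 + r, p.2 * e))).sum
          = (L.map fun p => p.1 • (p.2 * e) + r • (p.2 * e)).sum := by
        congr 1
        refine List.map_congr_left ?_
        intro p hp
        simp only [Function.comp_apply]
        rw [add_smul]
      rw [this, list_sum_add]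
      congr 1
      · rw [← hsum, list_sum_mul]
        congr 1
        refine List.map_congr_left ?_
        intro p hp
        rw [smul_mul_assoc]
      · rw [list_smul_sum, hQdef, list_sum_mul]
    have e2 : (L.map ((fun p : R × A => p.1 • p.2) ∘ fun p => (p.1, p.2 - p.2 * e))).sum
        = a - a * e := by
      have : (L.map ((fun p : R × A => p.1 • p.2) ∘ fun p => (p.1, p.2 - p.2 * e))).sum
          = (L.map fun p => p.1 • p.2 - p.1 • (p.2 * e)).sum := by
        congr 1
        refine List.map_congr_left ?_
        intro p hp
        simp only [Function.comp_apply]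
        rw [smul_sub]
      rw [this, list_sum_sub, hsum]
      congr 1
      rw [← hsum, list_sum_mul]
      congr 1
      refine List.map_congr_left ?_
      intro p hp
      rw [smul_mul_assoc]
    rw [e1, e2]
    simp only [List.map_singleton, List.sum_singleton]
    rw [smul_sub, mul_comm e Q]
    abel

private lemma orthoRep_all (hgen : NonUnitalAlgebra.adjoin R {e : A | IsIdempotentElem e} = ⊤)
    (a : A) : OrthoRep R a := by
  have key : ∀ (L : List (R × A)), (∀ p ∈ L, IsIdempotentElem p.2) →
      ∀ x : A, OrthoRep R x → OrthoRep R (x + (L.map fun p => p.1 • p.2).sum) := by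
    intro L
    induction L with
    | nil => intro _ x hx; simpa using hx
    | cons hd tl ih =>
      intro hidem x hx
      have h1 : OrthoRep R (x + hd.1 • hd.2) :=
        orthoRep_step hx hd.1 (hidem hd (List.mem_cons_self))
      have h2 := ih (fun p hp => hidem p (List.mem_cons_of_mem _ hp)) _ h1
      simpa [add_assoc] using h2
  have ha : a ∈ Submodule.span R {e : A | IsIdempotentElem e} := by
    rw [span_top hgen]; trivial
  induction ha using Submodule.span_induction with
  | mem x hx => exact ⟨[(1, x)], by simpa using hx, by simp, by simp⟩
  | zero => exact ⟨[], by simp, by simp, by simp⟩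
  | add x y hx hy ihx ihy =>
    obtain ⟨L, hidem, horth, hsum⟩ := ihy
    have := key L hidem x ihx
    rwa [hsum] at this
  | smul s x hx ihx =>
    obtain ⟨L, h1, h2, h3⟩ := ihx
    refine ⟨L.map fun p => (s * p.1, p.2), ?_, ?_, ?_⟩
    · intro p hp
      obtain ⟨q, hq, rfl⟩ := List.mem_map.mp hp
      exact h1 q hq
    · rw [List.pairwise_map]
      exact h2.imp fun h => h
    · rw [List.map_map]
      have : (L.map ((fun p : R × A => p.1 • p.2) ∘ fun p => (s * p.1, p.2))).sum
          = (L.map fun p => s • (p.1 • p.2)).sum := by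
        congr 1
        refine List.map_congr_left ?_
        intro p hp
        simp only [Function.comp_apply]
        rw [mul_smul]
      rw [this, list_smul_sum, h3]

private lemma orthoRep_eval (L : List (R × A)) (hidem : ∀ p ∈ L, IsIdempotentElem p.2)
    (horth : L.Pairwise fun p q => p.2 * q.2 = 0) :
    ∀ p ∈ L, (L.map fun p => p.1 • p.2).sum * p.2 = p.1 • p.2 := by
  induction L with
  | nil => simp
  | cons hd tl ih =>
    obtain ⟨hhd, htl⟩ := List.pairwise_cons.mp horth
    intro p hp
    rcases List.mem_cons.mp hp with rfl | hp'
    · simp only [List.map_cons, List.sum_cons, add_mul]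
      rw [smul_mul_assoc, (hidem p (List.mem_cons_self)).eq]
      have hz : (tl.map fun p => p.1 • p.2).sum * p.2 = 0 := by
        rw [list_sum_mul]
        refine List.sum_eq_zero ?_
        intro x hx
        obtain ⟨q, hq, rfl⟩ := List.mem_map.mp hx
        rw [smul_mul_assoc, mul_comm q.2, hhd q hq, smul_zero]
      rw [hz, add_zero]
    · simp only [List.map_cons, List.sum_cons, add_mul]
      rw [smul_mul_assoc, hhd p hp', smul_zero, zero_add]
      exact ih (fun q hq => hidem q (List.mem_cons_of_mem _ hq)) htl p hp'

end KeimelProof4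


section KeimelProof5

set_option linter.unusedSectionVars false
set_option linter.unusedVariables false

open TopologicalSpace

variable {R : Type*} [CommRing R] {A : Type*} [NonUnitalCommRing A]
  [Module R A] [SMulCommClass R A A] [IsScalarTower R A A]

private noncomputable def phiFun
    (hgen : NonUnitalAlgebra.adjoin R {e : A | IsIdempotentElem e} = ⊤)
    (a : A) (ξ : IdemUltra A) : R :=
  (exists_val hgen a ξ).choose

private lemma phiFun_spec (hgen : NonUnitalAlgebra.adjoin R {e : A | IsIdempotentElem e} = ⊤)
    (hfaith : ∀ (r : R) (e : A), IsIdempotentElem e → r • e = 0 → r = 0 ∨ e = 0)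
    {a : A} {ξ : IdemUltra A} {e : A} {r : R} (he : e ∈ ξ.carrier) (h : a * e = r • e) :
    phiFun hgen a ξ = r := by
  obtain ⟨e', he', h'⟩ := (exists_val hgen a ξ).choose_spec
  have hc : phiFun hgen a ξ = (exists_val hgen a ξ).choose := rfl
  set c := (exists_val hgen a ξ).choose with hcdef
  rw [hc]
  have hf : e' * e ∈ ξ.carrier := ξ.mul_mem e' he' e he
  have h1 : a * (e' * e) = c • (e' * e) := by
    rw [← mul_assoc, h', smul_mul_assoc]
  have h2 : a * (e' * e) = r • (e' * e) := by
    rw [mul_comm e' e, ← mul_assoc, h, smul_mul_assoc, mul_comm e e']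
  have h3 : (c - r) • (e' * e) = 0 := by
    rw [sub_smul, ← h1, ← h2, sub_self]
  rcases hfaith _ _ (ξ.mem_idem hf) h3 with h4 | h4
  · exact sub_eq_zero.mp h4
  · exact absurd h4 (ξ.mem_ne_zero hf)

private lemma phiFun_zero (hgen : NonUnitalAlgebra.adjoin R {e : A | IsIdempotentElem e} = ⊤)
    (hfaith : ∀ (r : R) (e : A), IsIdempotentElem e → r • e = 0 → r = 0 ∨ e = 0)
    (ξ : IdemUltra A) : phiFun hgen (0 : A) ξ = 0 := by
  obtain ⟨m, hm⟩ := ξ.nonempty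
  exact phiFun_spec hgen hfaith hm (by rw [zero_mul, zero_smul])

private lemma phiFun_add (hgen : NonUnitalAlgebra.adjoin R {e : A | IsIdempotentElem e} = ⊤)
    (hfaith : ∀ (r : R) (e : A), IsIdempotentElem e → r • e = 0 → r = 0 ∨ e = 0)
    (a b : A) (ξ : IdemUltra A) :
    phiFun hgen (a + b) ξ = phiFun hgen a ξ + phiFun hgen b ξ := by
  obtain ⟨r₁, e₁, he₁, h₁⟩ := exists_val hgen a ξ
  obtain ⟨r₂, e₂, he₂, h₂⟩ := exists_val hgen b ξ
  have hm : e₁ * e₂ ∈ ξ.carrier := ξ.mul_mem e₁ he₁ e₂ he₂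
  have ha : a * (e₁ * e₂) = r₁ • (e₁ * e₂) := by
    rw [← mul_assoc, h₁, smul_mul_assoc]
  have hb : b * (e₁ * e₂) = r₂ • (e₁ * e₂) := by
    rw [mul_comm e₁ e₂, ← mul_assoc, h₂, smul_mul_assoc, mul_comm e₂ e₁]
  rw [phiFun_spec hgen hfaith hm (show (a + b) * (e₁ * e₂) = (r₁ + r₂) • (e₁ * e₂) by
      rw [add_mul, ha, hb, add_smul]),
    phiFun_spec hgen hfaith he₁ h₁, phiFun_spec hgen hfaith he₂ h₂]

private lemma phiFun_sub (hgen : NonUnitalAlgebra.adjoin R {e : A | IsIdempotentElem e} = ⊤)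
    (hfaith : ∀ (r : R) (e : A), IsIdempotentElem e → r • e = 0 → r = 0 ∨ e = 0)
    (a b : A) (ξ : IdemUltra A) :
    phiFun hgen (a - b) ξ = phiFun hgen a ξ - phiFun hgen b ξ := by
  obtain ⟨r₁, e₁, he₁, h₁⟩ := exists_val hgen a ξ
  obtain ⟨r₂, e₂, he₂, h₂⟩ := exists_val hgen b ξ
  have hm : e₁ * e₂ ∈ ξ.carrier := ξ.mul_mem e₁ he₁ e₂ he₂
  have ha : a * (e₁ * e₂) = r₁ • (e₁ * e₂) := by
    rw [← mul_assoc, h₁, smul_mul_assoc]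
  have hb : b * (e₁ * e₂) = r₂ • (e₁ * e₂) := by
    rw [mul_comm e₁ e₂, ← mul_assoc, h₂, smul_mul_assoc, mul_comm e₂ e₁]
  rw [phiFun_spec hgen hfaith hm (show (a - b) * (e₁ * e₂) = (r₁ - r₂) • (e₁ * e₂) by
      rw [sub_mul, ha, hb, sub_smul]),
    phiFun_spec hgen hfaith he₁ h₁, phiFun_spec hgen hfaith he₂ h₂]

private lemma phiFun_mul (hgen : NonUnitalAlgebra.adjoin R {e : A | IsIdempotentElem e} = ⊤)
    (hfaith : ∀ (r : R) (e : A), IsIdempotentElem e → r • e = 0 → r = 0 ∨ e = 0)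
    (a b : A) (ξ : IdemUltra A) :
    phiFun hgen (a * b) ξ = phiFun hgen a ξ * phiFun hgen b ξ := by
  obtain ⟨r₁, e₁, he₁, h₁⟩ := exists_val hgen a ξ
  obtain ⟨r₂, e₂, he₂, h₂⟩ := exists_val hgen b ξ
  have hm : e₁ * e₂ ∈ ξ.carrier := ξ.mul_mem e₁ he₁ e₂ he₂
  have hab : (a * b) * (e₁ * e₂) = (r₁ * r₂) • (e₁ * e₂) := by
    rw [mul_mul_mul_comm, h₁, h₂, smul_mul_assoc, mul_smul_comm, smul_smul]
  rw [phiFun_spec hgen hfaith hm hab, phiFun_spec hgen hfaith he₁ h₁,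
    phiFun_spec hgen hfaith he₂ h₂]

private lemma phiFun_smul (hgen : NonUnitalAlgebra.adjoin R {e : A | IsIdempotentElem e} = ⊤)
    (hfaith : ∀ (r : R) (e : A), IsIdempotentElem e → r • e = 0 → r = 0 ∨ e = 0)
    (s : R) (a : A) (ξ : IdemUltra A) :
    phiFun hgen (s • a) ξ = s * phiFun hgen a ξ := by
  obtain ⟨r₁, e₁, he₁, h₁⟩ := exists_val hgen a ξ
  have hsa : (s • a) * e₁ = (s * r₁) • e₁ := by
    rw [smul_mul_assoc, h₁, smul_smul]
  rw [phiFun_spec hgen hfaith he₁ hsa, phiFun_spec hgen hfaith he₁ h₁]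

private lemma phiFun_indicator
    (hgen : NonUnitalAlgebra.adjoin R {e : A | IsIdempotentElem e} = ⊤)
    (hfaith : ∀ (r : R) (e : A), IsIdempotentElem e → r • e = 0 → r = 0 ∨ e = 0)
    {e : A} (he : IsIdempotentElem e) :
    phiFun hgen e = Set.indicator (OE e) fun _ => (1 : R) := by
  funext ξ
  by_cases hξ : e ∈ ξ.carrier
  · rw [Set.indicator_of_mem (show ξ ∈ OE e from hξ)]
    exact phiFun_spec hgen hfaith hξ (by rw [he.eq, one_smul])
  · obtain ⟨g, hg, hg0⟩ := ξ.compl_mem he hξ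
    rw [Set.indicator_of_notMem (show ξ ∉ OE e from hξ)]
    exact phiFun_spec hgen hfaith hg (by rw [hg0, zero_smul])

private lemma phiFun_locallyConstant
    (hgen : NonUnitalAlgebra.adjoin R {e : A | IsIdempotentElem e} = ⊤)
    (hfaith : ∀ (r : R) (e : A), IsIdempotentElem e → r • e = 0 → r = 0 ∨ e = 0)
    (a : A) : IsLocallyConstant (phiFun hgen a) := by
  rw [IsLocallyConstant.iff_exists_open]
  intro ξ
  obtain ⟨r, e, he, h⟩ := exists_val hgen a ξ
  refine ⟨OE e, isOpen_OE (ξ.mem_idem he), he, ?_⟩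
  intro ξ' hξ'
  rw [phiFun_spec hgen hfaith hξ' h, phiFun_spec hgen hfaith he h]

private lemma phiFun_hasCompactSupport
    (hgen : NonUnitalAlgebra.adjoin R {e : A | IsIdempotentElem e} = ⊤)
    (hfaith : ∀ (r : R) (e : A), IsIdempotentElem e → r • e = 0 → r = 0 ∨ e = 0)
    (a : A) : HasCompactSupport (phiFun hgen a) := by
  obtain ⟨E, hEI, hAE⟩ := locunit hgen a
  have hsub : Function.support (phiFun hgen a) ⊆ OE E := by
    intro ξ hξ
    by_contra hξE
    obtain ⟨g, hg, hg0⟩ := ξ.compl_mem hEI hξE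
    have hza : a * g = (0 : R) • g := by
      rw [zero_smul, ← hAE, mul_assoc, hg0, mul_zero]
    exact hξ (phiFun_spec hgen hfaith hg hza)
  rw [hasCompactSupport_def]
  exact IsCompact.of_isClosed_subset (isCompact_OE hEI) isClosed_closure
    (closure_minimal hsub (isClosed_OE hEI))

private lemma filter_sum (pr : R × A → Bool) (h : ∀ p, pr p = false → p.1 • p.2 = 0)
    (L : List (R × A)) :
    ((L.filter pr).map fun p => p.1 • p.2).sum = (L.map fun p => p.1 • p.2).sum := by
  induction L with
  | nil => simp
  | cons hd tl ih =>
    rw [List.filter_cons]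
    cases hpr : pr hd with
    | true => simp [ih]
    | false => simp [ih, h hd hpr]

private lemma phiFun_inj (hgen : NonUnitalAlgebra.adjoin R {e : A | IsIdempotentElem e} = ⊤)
    (hfaith : ∀ (r : R) (e : A), IsIdempotentElem e → r • e = 0 → r = 0 ∨ e = 0)
    {a : A} (h : ∀ ξ, phiFun hgen a ξ = 0) : a = 0 := by
  classical
  by_contra ha
  obtain ⟨L, hidem, horth, hsum⟩ := orthoRep_all hgen a
  set pr : R × A → Bool := fun p => decide (¬ p.1 • p.2 = 0) with hprdef
  set L' := L.filter pr with hL'def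
  have hL'sub : ∀ p ∈ L', p ∈ L := fun p hp => (List.mem_filter.mp hp).1
  have hL'ne : ∀ p ∈ L', ¬ p.1 • p.2 = 0 :=
    fun p hp => of_decide_eq_true (List.mem_filter.mp hp).2
  have hL'sum : (L'.map fun p => p.1 • p.2).sum = a := by
    rw [hL'def, filter_sum pr (fun p hp => not_not.mp (of_decide_eq_false hp)), hsum]
  have hL'pair : L'.Pairwise (fun p q => p.2 * q.2 = 0) :=
    List.Pairwise.sublist (List.filter_sublist) horth
  have hne : L' ≠ [] := by
    intro h0
    rw [h0] at hL'sum
    simp only [List.map_nil, List.sum_nil] at hL'sum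
    exact ha hL'sum.symm
  obtain ⟨p, hp⟩ := List.exists_mem_of_ne_nil L' hne
  have heval := orthoRep_eval L' (fun q hq => hidem q (hL'sub q hq)) hL'pair p hp
  rw [hL'sum] at heval
  have hpI := hidem p (hL'sub p hp)
  have hp1 : p.1 ≠ 0 := fun h0 => hL'ne p hp (by rw [h0, zero_smul])
  have hp2 : p.2 ≠ 0 := fun h0 => hL'ne p hp (by rw [h0, smul_zero])
  obtain ⟨ξ, hξ⟩ := exists_ultra hpI hp2
  have hval := phiFun_spec hgen hfaith hξ heval
  rw [h ξ] at hval
  exact hp1 hval.symm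

private lemma phiFun_surj (hgen : NonUnitalAlgebra.adjoin R {e : A | IsIdempotentElem e} = ⊤)
    (hfaith : ∀ (r : R) (e : A), IsIdempotentElem e → r • e = 0 → r = 0 ∨ e = 0)
    (f : IdemUltra A → R) (hlc : IsLocallyConstant f) (hcs : HasCompactSupport f) :
    ∃ a : A, phiFun hgen a = f := by
  classical
  have hsupp_open : IsOpen (Function.support f) := by
    rw [Function.support_eq_preimage]
    exact hlc _
  have hsupp_closed : IsClosed (Function.support f) := by
    rw [Function.support_eq_preimage, Set.preimage_compl]
    exact (hlc {0}).isClosed_compl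
  have hK : IsCompact (Function.support f) :=
    IsCompact.of_isClosed_subset hcs hsupp_closed (subset_tsupport f)
  obtain ⟨T, hT⟩ := hK.elim_finite_subcover (fun r : R => f ⁻¹' {r})
    (fun r => hlc _) (fun ξ _ => Set.mem_iUnion.mpr ⟨f ξ, rfl⟩)
  set V : R → Set (IdemUltra A) := fun r => f ⁻¹' {r} ∩ Function.support f with hVdef
  have hVopen : ∀ r, IsOpen (V r) := fun r => (hlc _).inter hsupp_open
  have hVclosed : ∀ r, IsClosed (V r) := by
    intro r
    refine IsClosed.inter ?_ hsupp_closed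
    rw [← isOpen_compl_iff, ← Set.preimage_compl]
    exact hlc _
  have hVcompact : ∀ r, IsCompact (V r) := fun r =>
    IsCompact.of_isClosed_subset hcs (hVclosed r)
      ((Set.inter_subset_right).trans (subset_tsupport f))
  have hVE : ∀ r : R, ∃ E : A, IsIdempotentElem E ∧ OE E = V r :=
    fun r => compact_open_eq_OE (hVcompact r) (hVopen r)
  choose E hEI hEV using hVE
  refine ⟨∑ r ∈ T, r • E r, ?_⟩
  funext ξ
  have hsum : ∀ s : Finset R, phiFun hgen (∑ r ∈ s, r • E r) ξ
      = ∑ r ∈ s, r * Set.indicator (V r) (fun _ => (1 : R)) ξ := by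
    intro s
    induction s using Finset.induction with
    | empty => simp [phiFun_zero hgen hfaith]
    | @insert i s hni ih =>
      rw [Finset.sum_insert hni, Finset.sum_insert hni, phiFun_add hgen hfaith,
        phiFun_smul hgen hfaith, ih, phiFun_indicator hgen hfaith (hEI i), hEV i]
  rw [hsum T]
  by_cases hξ : ξ ∈ Function.support f
  · have hfT : f ξ ∈ T := by
      have hmem := hT hξ
      simp only [Set.mem_iUnion, Set.mem_preimage, Set.mem_singleton_iff] at hmem
      obtain ⟨r, hrm, hr⟩ := hmem
      rwa [hr]
    rw [Finset.sum_eq_single_of_mem (f ξ) hfT]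
    · rw [Set.indicator_of_mem (show ξ ∈ V (f ξ) from ⟨rfl, hξ⟩), mul_one]
    · intro r hrT hrne
      rw [Set.indicator_of_notMem, mul_zero]
      rintro ⟨hr1, -⟩
      exact hrne (show f ξ = r from hr1).symm
  · have hf0 : f ξ = 0 := Function.notMem_support.mp hξ
    rw [hf0]
    refine Finset.sum_eq_zero ?_
    intro r hrT
    rw [Set.indicator_of_notMem, mul_zero]
    rintro ⟨-, hr2⟩
    exact hξ hr2

end KeimelProof5

theorem keimel_iso_Lc (R : Type*) [CommRing R] (A : Type*) [NonUnitalCommRing A]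
    [Module R A] [SMulCommClass R A A] [IsScalarTower R A A]
    (hgen : NonUnitalAlgebra.adjoin R {e : A | IsIdempotentElem e} = ⊤)
    (hfaith : ∀ (r : R) (e : A), IsIdempotentElem e → r • e = 0 → r = 0 ∨ e = 0) :
    ∃ Φ : A →ₙₐ[R] ↥(LcSub R (IdemUltra A)),
      Function.Bijective Φ ∧
      ∀ e : A, IsIdempotentElem e →
        (↑(Φ e) : IdemUltra A → R) = Set.indicator (OE e) fun _ => 1 := by
  classical
  have memLc : ∀ a : A, phiFun hgen a ∈ LcSub R (IdemUltra A) := fun a =>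
    ⟨phiFun_locallyConstant hgen hfaith a, phiFun_hasCompactSupport hgen hfaith a⟩
  refine ⟨{ toFun := fun a => ⟨phiFun hgen a, memLc a⟩
            map_smul' := fun s a => Subtype.ext (funext fun ξ =>
              phiFun_smul hgen hfaith s a ξ)
            map_zero' := Subtype.ext (funext fun ξ =>
              phiFun_zero hgen hfaith ξ)
            map_add' := fun a b => Subtype.ext (funext fun ξ =>
              phiFun_add hgen hfaith a b ξ)
            map_mul' := fun a b => Subtype.ext (funext fun ξ =>
              phiFun_mul hgen hfaith a b ξ) }, ⟨?_, ?_⟩, ?_⟩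
  · intro a b hab
    have hval : phiFun hgen a = phiFun hgen b := congrArg Subtype.val hab
    have : a - b = 0 := by
      refine phiFun_inj hgen hfaith ?_
      intro ξ
      rw [phiFun_sub hgen hfaith, congrFun hval ξ, sub_self]
    exact sub_eq_zero.mp this
  · rintro ⟨f, hf1, hf2⟩
    obtain ⟨a, ha⟩ := phiFun_surj hgen hfaith f hf1 hf2
    exact ⟨a, Subtype.ext ha⟩
  · intro e he
    exact phiFun_indicator hgen hfaith he
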